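/- Let A satisfy A𝟏=0, Ax = e_R−e_L with Ā invertible. Define B = G₂ + x xᵀ + 𝟏 yᵀ for an arbitrary vector y ∈ ℝ^{n+1}. Then BA = I + 𝟏(Ay − e_L)ᵀ; in particular BAv differs from v by a constant multiple of the ones vector for every v. -/

import Mathlib

open Matrix

noncomputable section

def onesVec (n : ℕ) : Fin (n+1) → ℝ := fun _ => 1

def gridVec (n : ℕ) : Fin (n+1) → ℝ := fun i => (i : ℝ) / n

def eL (n : ℕ) : Fin (n+1) → ℝ := fun i => if i.1 = 0 then 1 else 0

def eR (n : ℕ) : Fin (n+1) → ℝ := fun i => if i.1 = n then 1 else 0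

def interiorEmb (n : ℕ) : Fin (n-1) → Fin (n+1) :=
  fun i => ⟨i.1 + 1, by have := i.isLt; omega⟩

def centralBlock (n : ℕ) (A : Matrix (Fin (n+1)) (Fin (n+1)) ℝ) :
    Matrix (Fin (n-1)) (Fin (n-1)) ℝ :=
  A.submatrix (interiorEmb n) (interiorEmb n)

def pad (n : ℕ) (B : Matrix (Fin (n-1)) (Fin (n-1)) ℝ) :
    Matrix (Fin (n+1)) (Fin (n+1)) ℝ :=
  fun i j =>
    if hi : 0 < i.1 ∧ i.1 < n then
      if hj : 0 < j.1 ∧ j.1 < n then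
        B ⟨i.1 - 1, by omega⟩ ⟨j.1 - 1, by omega⟩
      else 0
    else 0

def G2 (n : ℕ) (A : Matrix (Fin (n+1)) (Fin (n+1)) ℝ) :
    Matrix (Fin (n+1)) (Fin (n+1)) ℝ :=
  pad n (centralBlock n A)⁻¹

def Aplus (n : ℕ) (A : Matrix (Fin (n+1)) (Fin (n+1)) ℝ) :
    Matrix (Fin (n+1)) (Fin (n+1)) ℝ :=
  (1 - ((n : ℝ) + 1)⁻¹ • vecMulVec (onesVec n) (onesVec n)) * G2 n A *
      (1 - ((n : ℝ) + 1)⁻¹ • vecMulVec (onesVec n) (onesVec n)) +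
    vecMulVec (gridVec n - (1/2 : ℝ) • onesVec n)
      (gridVec n - (1/2 : ℝ) • onesVec n)

lemma interiorEmb_injective (n : ℕ) : Function.Injective (interiorEmb n) := by
  intro a b h
  simp only [interiorEmb, Fin.mk.injEq] at h
  exact Fin.ext (by omega)

lemma sum_decomp (n : ℕ) (hn : 2 ≤ n) (f : Fin (n+1) → ℝ) :
    ∑ k, f k = f ⟨0, by omega⟩ + f ⟨n, by omega⟩ + ∑ k' : Fin (n-1), f (interiorEmb n k') := by
  classical
  have himg : (Finset.univ.filter (fun k : Fin (n+1) => 0 < k.1 ∧ k.1 < n))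
      = Finset.univ.image (interiorEmb n) := by
    ext k
    simp only [Finset.mem_filter, Finset.mem_image, Finset.mem_univ, true_and]
    constructor
    · rintro ⟨h1, h2⟩
      exact ⟨⟨k.1 - 1, by omega⟩, Fin.ext (by simp [interiorEmb]; omega)⟩
    · rintro ⟨k', rfl⟩
      have := k'.isLt
      simp only [interiorEmb]
      omega
  have hnot : (Finset.univ.filter (fun k : Fin (n+1) => ¬(0 < k.1 ∧ k.1 < n)))
      = {(⟨0, by omega⟩ : Fin (n+1)), ⟨n, by omega⟩} := by
    ext k
    simp only [Finset.mem_filter, Finset.mem_univ, true_and, Finset.mem_insert,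
      Finset.mem_singleton, Fin.ext_iff]
    have := k.isLt
    omega
  have hsplit := Finset.sum_filter_add_sum_filter_not Finset.univ
    (fun k : Fin (n+1) => 0 < k.1 ∧ k.1 < n) f
  rw [himg, hnot] at hsplit
  rw [Finset.sum_image (fun a _ b _ h => interiorEmb_injective n h)] at hsplit
  rw [Finset.sum_pair (by simp [Fin.ext_iff]; omega)] at hsplit
  linarith [hsplit]

theorem pseudoinverse_with_filtering
    (n : ℕ) (hn : 2 ≤ n) (A : Matrix (Fin (n+1)) (Fin (n+1)) ℝ)
    (hsym : A.IsSymm)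
    (h1 : A *ᵥ onesVec n = 0)
    (hx : A *ᵥ gridVec n = eR n - eL n)
    (hinv : IsUnit (centralBlock n A).det)
    (y : Fin (n+1) → ℝ) :
    (G2 n A + vecMulVec (gridVec n) (gridVec n) + vecMulVec (onesVec n) y) * A =
      1 + vecMulVec (onesVec n) (A *ᵥ y - eL n) ∧
    ∀ v : Fin (n+1) → ℝ, ∃ c : ℝ,
      ((G2 n A + vecMulVec (gridVec n) (gridVec n) + vecMulVec (onesVec n) y) * A) *ᵥ v
        = v + c • onesVec n := by
  classical
  have hn0 : (n : ℝ) ≠ 0 := by positivity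
  have hA : ∀ a b, A a b = A b a := fun a b => hsym.apply b a
  -- row sums of A are zero
  have S1 : ∀ k : Fin (n+1), ∑ j, A k j = 0 := by
    intro k
    have := congrFun h1 k
    simpa [mulVec, dotProduct, onesVec] using this
  have S2 : ∀ k : Fin (n+1), ∑ j, A k j * gridVec n j = (eR n - eL n) k := by
    intro k
    have := congrFun hx k
    simpa [mulVec, dotProduct] using this
  -- gridVec boundary values
  have hg0 : gridVec n ⟨0, by omega⟩ = 0 := by simp [gridVec]
  have hgn : gridVec n ⟨n, by omega⟩ = 1 := by
    simp only [gridVec]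
    exact div_self hn0
  -- target expression
  set T : Fin (n+1) → Fin (n+1) → ℝ := fun i j =>
    (if i = j then (1:ℝ) else 0) - gridVec n i * ((eR n - eL n) j) - eL n j with hT
  -- column representation
  have hcol : ∀ (j : Fin (n+1)) (k' : Fin (n-1)),
      A (interiorEmb n k') j
        = ∑ j' : Fin (n-1), centralBlock n A k' j' * T (interiorEmb n j') j := by
    intro j k'
    have hk := k'.isLt
    have hint : 0 < (interiorEmb n k').1 ∧ (interiorEmb n k').1 < n := by
      simp only [interiorEmb]; omega
    have s1 := sum_decomp n hn (fun jj => A (interiorEmb n k') jj)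
    rw [S1] at s1
    have s2 := sum_decomp n hn (fun jj => A (interiorEmb n k') jj * gridVec n jj)
    rw [S2] at s2
    have heq0 : (eR n - eL n) (interiorEmb n k') = 0 := by
      simp only [Pi.sub_apply, eR, eL, interiorEmb]
      rw [if_neg (by omega), if_neg (by omega)]; ring
    rw [heq0, hg0, hgn] at s2
    simp only [mul_zero, mul_one, zero_add] at s2
    -- s2 : A k ⟨n⟩ + ∑ A k (emb j') * x (emb j') = 0
    simp only [hT, centralBlock, submatrix_apply]
    simp only [mul_sub]
    rw [Finset.sum_sub_distrib, Finset.sum_sub_distrib]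
    have hsum1 : ∑ j' : Fin (n-1),
        A (interiorEmb n k') (interiorEmb n j') * (if interiorEmb n j' = j then (1:ℝ) else 0)
        = if (0 < j.1 ∧ j.1 < n) then A (interiorEmb n k') j else 0 := by
      split_ifs with hj
      · have hjj : interiorEmb n (⟨j.1 - 1, by omega⟩ : Fin (n-1)) = j :=
          Fin.ext (by simp [interiorEmb]; omega)
        rw [Finset.sum_eq_single (⟨j.1 - 1, by omega⟩ : Fin (n-1))]
        · rw [if_pos hjj, mul_one, hjj]
        · intro b _ hb
          rw [if_neg, mul_zero]
          intro hbj
          exact hb (interiorEmb_injective n (hbj.trans hjj.symm))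
        · intro h; exact absurd (Finset.mem_univ _) h
      · apply Finset.sum_eq_zero
        intro b _
        rw [if_neg, mul_zero]
        intro hbj
        have := b.isLt
        simp only [interiorEmb, Fin.ext_iff] at hbj
        omega
    rw [hsum1]
    rw [show (∑ j' : Fin (n-1), A (interiorEmb n k') (interiorEmb n j')
        * (gridVec n (interiorEmb n j') * (eR n - eL n) j))
      = (∑ j' : Fin (n-1), A (interiorEmb n k') (interiorEmb n j') * gridVec n (interiorEmb n j'))
        * (eR n - eL n) j by rw [Finset.sum_mul]; congr 1; ext j'; ring]
    rw [show (∑ j' : Fin (n-1), A (interiorEmb n k') (interiorEmb n j') * eL n j)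
      = (∑ j' : Fin (n-1), A (interiorEmb n k') (interiorEmb n j')) * eL n j from
      (Finset.sum_mul _ _ _).symm]
    -- now use s1, s2
    rcases Nat.lt_trichotomy j.1 0 with h0 | h0 | h0
    · omega
    · have heRj : eR n j = 0 := by simp only [eR]; rw [if_neg (by omega)]
      have heLj : eL n j = 1 := by simp only [eL]; rw [if_pos h0]
      have hj0 : j = ⟨0, by omega⟩ := Fin.ext h0
      rw [if_neg (by omega), Pi.sub_apply, heRj, heLj, hj0]
      ring_nf
      ring_nf at s1 s2
      linarith
    · rcases Nat.lt_trichotomy j.1 n with h1' | h1' | h1'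
      · rw [if_pos ⟨h0, h1'⟩]
        have heL : eL n j = 0 := by simp only [eL]; rw [if_neg (by omega)]
        have heR : eR n j = 0 := by simp only [eR]; rw [if_neg (by omega)]
        rw [Pi.sub_apply, heL, heR]
        ring
      · have heRj : eR n j = 1 := by simp only [eR]; rw [if_pos h1']
        have heLj : eL n j = 0 := by simp only [eL]; rw [if_neg (by omega)]
        have hjn : j = ⟨n, by omega⟩ := Fin.ext h1'
        rw [if_neg (by omega), Pi.sub_apply, heRj, heLj, hjn]
        ring_nf
        ring_nf at s1 s2
        linarith
      · have := j.isLt; omega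
  -- core: G2 * A entries
  have hAinv : (centralBlock n A)⁻¹ * centralBlock n A = 1 := nonsing_inv_mul _ hinv
  have hcore : ∀ i j, (G2 n A * A) i j = T i j := by
    intro i j
    rw [mul_apply]
    by_cases hi : 0 < i.1 ∧ i.1 < n
    · set i' : Fin (n-1) := ⟨i.1 - 1, by omega⟩ with hi'
      have hiemb : interiorEmb n i' = i := Fin.ext (by simp [interiorEmb, hi']; omega)
      have hrow : ∀ k, G2 n A i k * A k j
          = pad n (centralBlock n A)⁻¹ i k * A k j := fun _ => rfl
      rw [sum_decomp n hn]
      have hz0 : G2 n A i ⟨0, by omega⟩ = 0 := by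
        simp [G2, pad]
      have hzn : G2 n A i ⟨n, by omega⟩ = 0 := by
        simp [G2, pad]
      rw [hz0, hzn, zero_mul, zero_mul, zero_add, zero_add]
      have hGk : ∀ k' : Fin (n-1), G2 n A i (interiorEmb n k')
          = (centralBlock n A)⁻¹ i' k' := by
        intro k'
        have hk := k'.isLt
        simp only [G2, pad, interiorEmb]
        rw [dif_pos hi]; refine (dif_pos (show 0 < k'.1 + 1 ∧ k'.1 + 1 < n by constructor <;> omega)).trans ?_
        congr 1
      calc ∑ k' : Fin (n-1), G2 n A i (interiorEmb n k') * A (interiorEmb n k') j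
          = ∑ k' : Fin (n-1), (centralBlock n A)⁻¹ i' k'
              * ∑ j' : Fin (n-1), centralBlock n A k' j' * T (interiorEmb n j') j := by
            apply Finset.sum_congr rfl
            intro k' _
            rw [hGk, hcol]
        _ = ∑ j' : Fin (n-1),
              (∑ k' : Fin (n-1), (centralBlock n A)⁻¹ i' k' * centralBlock n A k' j')
                * T (interiorEmb n j') j := by
            simp_rw [Finset.mul_sum, Finset.sum_mul]
            rw [Finset.sum_comm]
            apply Finset.sum_congr rfl
            intro j' _
            apply Finset.sum_congr rfl
            intro k' _
            ring
        _ = ∑ j' : Fin (n-1), (1 : Matrix (Fin (n-1)) (Fin (n-1)) ℝ) i' j'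
              * T (interiorEmb n j') j := by
            apply Finset.sum_congr rfl
            intro j' _
            rw [← hAinv, mul_apply]
        _ = T (interiorEmb n i') j := by
            rw [Finset.sum_eq_single i']
            · rw [one_apply_eq, one_mul]
            · intro b _ hb
              rw [one_apply_ne (Ne.symm hb), zero_mul]
            · intro h; exact absurd (Finset.mem_univ _) h
        _ = T i j := by rw [hiemb]
    · have hz : ∀ k, G2 n A i k * A k j = 0 := by
        intro k
        simp only [G2, pad]; rw [dif_neg hi, zero_mul]
      rw [Finset.sum_eq_zero (fun k _ => hz k)]
      -- T i j = 0 for boundary rows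
      simp only [hT, Pi.sub_apply, eR, eL]
      rcases Nat.lt_trichotomy i.1 0 with h0 | h0 | h0
      · omega
      · have hgi : gridVec n i = 0 := by
          simp only [gridVec]
          rw [show ((i : Fin (n+1)) : ℝ) = ((i.1 : ℕ) : ℝ) from rfl, h0]
          simp
        rw [hgi, zero_mul, sub_zero]
        by_cases hj : j.1 = 0
        · rw [if_pos (Fin.ext (by omega)), if_pos hj]; ring
        · rw [if_neg (by rw [Fin.ext_iff]; omega), if_neg hj]; ring
      · have hin : i.1 = n := by have := i.isLt; omega
        have hgi : gridVec n i = 1 := by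
          simp only [gridVec]
          rw [show ((i : Fin (n+1)) : ℝ) = ((i.1 : ℕ) : ℝ) from rfl, hin]
          exact div_self hn0
        rw [hgi, one_mul]
        by_cases hj : j.1 = n
        · rw [if_pos (Fin.ext (by omega)), if_pos hj, if_neg (by omega)]; ring
        · rw [if_neg (by rw [Fin.ext_iff]; omega), if_neg hj]
          by_cases hj0 : j.1 = 0
          · rw [if_pos hj0]; ring
          · rw [if_neg hj0]; ring
  -- main equation
  have hmain : (G2 n A + vecMulVec (gridVec n) (gridVec n) + vecMulVec (onesVec n) y) * A =
      1 + vecMulVec (onesVec n) (A *ᵥ y - eL n) := by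
    ext i j
    rw [add_mul, add_mul, Matrix.add_apply, Matrix.add_apply, hcore, Matrix.add_apply]
    have h2 : (vecMulVec (gridVec n) (gridVec n) * A) i j
        = gridVec n i * (eR n - eL n) j := by
      rw [mul_apply]
      calc ∑ k, vecMulVec (gridVec n) (gridVec n) i k * A k j
          = gridVec n i * ∑ k, A j k * gridVec n k := by
            rw [Finset.mul_sum]
            apply Finset.sum_congr rfl
            intro k _
            rw [vecMulVec_apply, hA k j]
            ring
        _ = gridVec n i * (eR n - eL n) j := by rw [S2 j]
    have h3 : (vecMulVec (onesVec n) y * A) i j = (A *ᵥ y) j := by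
      rw [mul_apply]
      calc ∑ k, vecMulVec (onesVec n) y i k * A k j
          = ∑ k, A j k * y k := by
            apply Finset.sum_congr rfl
            intro k _
            rw [vecMulVec_apply, hA k j, onesVec]
            ring
        _ = (A *ᵥ y) j := by rw [mulVec, dotProduct]
    rw [h2, h3, vecMulVec_apply]
    simp only [hT, onesVec, Pi.sub_apply, one_apply]
    ring
  refine ⟨hmain, ?_⟩
  intro v
  refine ⟨(A *ᵥ y - eL n) ⬝ᵥ v, ?_⟩
  rw [hmain, add_mulVec, one_mulVec]
  congr 1
  funext i
  simp only [mulVec, dotProduct, vecMulVec_apply, onesVec, Pi.smul_apply, smul_eq_mul,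
    one_mul, mul_one]
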